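/- In the bar-type complex C_•(L) for the algebra B = Ext*(O ⊕ L, O ⊕ L), the element η⊗ξ⊗θ is a cycle in internal degree 2 and homological degree 3 which is not a boundary, and it differs from the cycle η⊗θ⊗ξ_L + ξ_L⊗η⊗θ by the boundary of η⊗θ⊗η⊗θ. -/

import Mathlib

/-- The four basis elements of `B₊ = ⟨θ, η, ξ, ξ_L⟩`. -/
inductive BLetter : Type
  | th   -- θ  (degree 0)
  | et   -- η  (degree 1)
  | xi   -- ξ  (degree 1)
  | xiL  -- ξ_L (degree 1)
deriving DecidableEq

instance : Fintype BLetter where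
  elems := {.th, .et, .xi, .xiL}
  complete x := by cases x <;> simp

/-- Left corner (`true` = `L`, `false` = `𝒪`): θ ∈ (𝒪,L), η ∈ (L,𝒪), ξ ∈ (𝒪,𝒪), ξ_L ∈ (L,L). -/
def lcorn : BLetter → Bool
  | .th => false | .et => true | .xi => false | .xiL => true

/-- Right corner. -/
def rcorn : BLetter → Bool
  | .th => true | .et => false | .xi => false | .xiL => true

/-- The internal degree of a basis letter: θ has degree 0; η, ξ, ξ_L degree 1. -/
def ldeg : BLetter → ℕ
  | .th => 0 | _ => 1

/-- Products of the generators in `B`: `η·θ = ξ_L`, `θ·η = ξ`, all other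
products of the four generators are zero. -/
def mulLetter : BLetter → BLetter → Option BLetter
  | .et, .th => some .xiL
  | .th, .et => some .xi
  | _, _ => none

/-- A word `w` is an admissible basis tensor of
`id_L ⊗_R B₊^{⊗_R n} ⊗_R id_L`: both end corners are `L` and adjacent corners
match. -/
def wordAdm (n : ℕ) (w : Fin n → BLetter) : Prop :=
  (∀ i : Fin n, (i : ℕ) = 0 → lcorn (w i) = true) ∧
  (∀ i : Fin n, (i : ℕ) = n - 1 → rcorn (w i) = true) ∧
  (∀ i j : Fin n, (j : ℕ) = (i : ℕ) + 1 → rcorn (w i) = lcorn (w j))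

instance (n : ℕ) (w : Fin n → BLetter) : Decidable (wordAdm n w) := by
  unfold wordAdm; infer_instance

/-- The internal degree of a word. -/
def wordDeg {n : ℕ} (w : Fin n → BLetter) : ℕ := ∑ i, ldeg (w i)

/-- `n`-chains of the bar-type complex `C_•(L)`: formal `k`-linear combinations
of words of length `n` (supported on admissible words). -/
abbrev BarChain (k : Type*) (n : ℕ) : Type _ := (Fin n → BLetter) → k

/-- The word obtained from `w` by merging the letters at positions `i`, `i+1`
(if their product is nonzero). -/
def mergeWord {n : ℕ} (w : Fin (n + 1) → BLetter) (i : ℕ) (h : i + 1 < n + 1) :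
    Option (Fin n → BLetter) :=
  (mulLetter (w ⟨i, by omega⟩) (w ⟨i + 1, h⟩)).map (fun ℓ j =>
    if (j : ℕ) < i then w ⟨j, by have := j.isLt; omega⟩
    else if (j : ℕ) = i then ℓ
    else w ⟨(j : ℕ) + 1, by have := j.isLt; omega⟩)

/-- The bar differential
`d(a₁⊗⋯⊗a_{n+1}) = Σ_{i=1}^{n} (−1)^i a₁⊗⋯⊗a_i a_{i+1}⊗⋯⊗a_{n+1}`. -/
noncomputable def barD (k : Type*) [Field k] (n : ℕ) :
    BarChain k (n + 1) →ₗ[k] BarChain k n where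
  toFun c v := ∑ w : Fin (n + 1) → BLetter,
    (∑ i ∈ Finset.range n, ((-1 : k) ^ (i + 1)) *
      (if h : i + 1 < n + 1 then
        (if wordAdm (n + 1) w ∧ mergeWord w i h = some v then 1 else 0) else 0)) * c w
  map_add' a b := by
    funext t
    simp [Pi.add_apply, mul_add, Finset.sum_add_distrib]
  map_smul' r c := by
    funext t
    simp only [Pi.smul_apply, smul_eq_mul, RingHom.id_apply, Finset.mul_sum]
    exact Finset.sum_congr rfl (fun s _ => by ring)

/-- `c` is supported on admissible words of internal degree `m`. -/
def barSupp (k : Type*) [Field k] (n m : ℕ) (c : BarChain k n) : Prop :=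
  ∀ w : Fin n → BLetter, ¬(wordAdm n w ∧ wordDeg w = m) → c w = 0

/-- The chain `η ⊗ ξ ⊗ θ`. -/
def genEtaXiTheta (k : Type*) [Field k] : BarChain k 3 := fun w =>
  if w = ![BLetter.et, BLetter.xi, BLetter.th] then 1 else 0

/-- The cycle `η ⊗ θ ⊗ ξ_L + ξ_L ⊗ η ⊗ θ`. -/
def sigmaChain (k : Type*) [Field k] : BarChain k 3 := fun w =>
  (if w = ![BLetter.et, BLetter.th, BLetter.xiL] then 1 else 0) +
  (if w = ![BLetter.xiL, BLetter.et, BLetter.th] then 1 else 0)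

/-- The chain `η ⊗ θ ⊗ η ⊗ θ`. -/
def etteChain (k : Type*) [Field k] : BarChain k 4 := fun w =>
  if w = ![BLetter.et, BLetter.th, BLetter.et, BLetter.th] then 1 else 0

lemma barD_apply (k : Type*) [Field k] (n : ℕ) (c : BarChain k (n+1)) (v : Fin n → BLetter) :
    barD k n c v = ∑ w : Fin (n + 1) → BLetter,
      (∑ i ∈ Finset.range n, ((-1 : k) ^ (i + 1)) *
        (if h : i + 1 < n + 1 then
          (if wordAdm (n + 1) w ∧ mergeWord w i h = some v then 1 else 0) else 0)) * c w := rfl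

lemma barD_indicator (k : Type*) [Field k] (n : ℕ) (w0 : Fin (n+1) → BLetter)
    (v : Fin n → BLetter) :
    barD k n (fun w => if w = w0 then 1 else 0) v =
      ∑ i ∈ Finset.range n, ((-1 : k) ^ (i + 1)) *
        (if h : i + 1 < n + 1 then
          (if wordAdm (n + 1) w0 ∧ mergeWord w0 i h = some v then 1 else 0) else 0) := by
  rw [barD_apply, Finset.sum_eq_single w0]
  · simp
  · intro w _ hw; simp [hw]
  · simp

lemma barD_indicator3 (k : Type*) [Field k] (w0 : Fin 4 → BLetter) (v : Fin 3 → BLetter) :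
    barD k 3 (fun w => if w = w0 then 1 else 0) v =
      ((if wordAdm (3+1) w0 ∧ mergeWord w0 0 (by omega) = some v then (-1 : k) else 0)
      + (if wordAdm (3+1) w0 ∧ mergeWord w0 1 (by omega) = some v then (1 : k) else 0))
      + (if wordAdm (3+1) w0 ∧ mergeWord w0 2 (by omega) = some v then (-1 : k) else 0) := by
  rw [barD_indicator]
  norm_num [Finset.sum_range_succ]

open BLetter in
set_option maxRecDepth 10000 in
lemma keyA : ∀ w : Fin 4 → BLetter, w ≠ ![et, th, et, th] → wordAdm 4 w →
    mergeWord w 0 (by omega) ≠ some ![et, xi, th] ∧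
    mergeWord w 1 (by omega) ≠ some ![et, xi, th] ∧
    mergeWord w 2 (by omega) ≠ some ![et, xi, th] := by decide

open BLetter in
set_option maxRecDepth 10000 in
lemma keyB : ∀ w : Fin 4 → BLetter, w ≠ ![et, th, et, th] → wordAdm 4 w →
    mergeWord w 0 (by omega) ≠ some ![et, th, xiL] ∧
    mergeWord w 1 (by omega) ≠ some ![et, th, xiL] ∧
    mergeWord w 2 (by omega) ≠ some ![et, th, xiL] := by decide

/-- In the bar-type complex `C_•(L)` for `B = Ext*(𝒪 ⊕ L, 𝒪 ⊕ L)`, the element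
`η ⊗ ξ ⊗ θ` is a cycle in internal degree 2 and homological degree 3 which is
not a boundary, and it differs from the cycle `η ⊗ θ ⊗ ξ_L + ξ_L ⊗ η ⊗ θ` by
the boundary of `η ⊗ θ ⊗ η ⊗ θ`. -/


theorem stmt_13 (k : Type*) [Field k] :
    barSupp k 3 2 (genEtaXiTheta k) ∧
    barD k 2 (genEtaXiTheta k) = 0 ∧
    (¬ ∃ b : BarChain k 4, barD k 3 b = genEtaXiTheta k) ∧
    genEtaXiTheta k - sigmaChain k = barD k 3 (etteChain k) := by
  refine ⟨?_, ?_, ?_, ?_⟩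
  · intro w hw
    unfold genEtaXiTheta
    split
    · rename_i h; subst h; exact absurd (by decide) hw
    · rfl
  · funext v
    have he : genEtaXiTheta k
        = (fun w => if w = ![BLetter.et, BLetter.xi, BLetter.th] then (1:k) else 0) := rfl
    rw [he, barD_indicator]
    have m0 : mergeWord ![BLetter.et, BLetter.xi, BLetter.th] 0 (by omega) = none := rfl
    have m1 : mergeWord ![BLetter.et, BLetter.xi, BLetter.th] 1 (by omega) = none := rfl
    simp [Finset.sum_range_succ, m0, m1]
  · rintro ⟨b, hb⟩
    have hb1 := congrFun hb ![BLetter.et, BLetter.xi, BLetter.th]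
    have hb2 := congrFun hb ![BLetter.et, BLetter.th, BLetter.xiL]
    rw [barD_apply] at hb1 hb2
    rw [Finset.sum_eq_single (![BLetter.et, BLetter.th, BLetter.et, BLetter.th])] at hb1
    rotate_left
    · intro w _ hw
      by_cases ha : wordAdm 4 w
      · obtain ⟨h0, h1, h2⟩ := keyA w hw ha
        simp [Finset.sum_range_succ, h0, h1, h2]
      · simp [Finset.sum_range_succ, ha]
    · simp
    rw [Finset.sum_eq_single (![BLetter.et, BLetter.th, BLetter.et, BLetter.th])] at hb2
    rotate_left
    · intro w _ hw
      by_cases ha : wordAdm 4 w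
      · obtain ⟨h0, h1, h2⟩ := keyB w hw ha
        simp [Finset.sum_range_succ, h0, h1, h2]
      · simp [Finset.sum_range_succ, ha]
    · simp
    have ma : mergeWord ![BLetter.et, BLetter.th, BLetter.et, BLetter.th] 0 (by omega)
        = some ![BLetter.xiL, BLetter.et, BLetter.th] := by
      unfold mergeWord; simp [mulLetter]; funext j; fin_cases j <;> rfl
    have mb : mergeWord ![BLetter.et, BLetter.th, BLetter.et, BLetter.th] 1 (by omega)
        = some ![BLetter.et, BLetter.xi, BLetter.th] := by
      unfold mergeWord; simp [mulLetter]; funext j; fin_cases j <;> rfl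
    have mc : mergeWord ![BLetter.et, BLetter.th, BLetter.et, BLetter.th] 2 (by omega)
        = some ![BLetter.et, BLetter.th, BLetter.xiL] := by
      unfold mergeWord; simp [mulLetter]; funext j; fin_cases j <;> rfl
    have adm : wordAdm 4 ![BLetter.et, BLetter.th, BLetter.et, BLetter.th] := by decide
    have d1 : (![BLetter.xiL, BLetter.et, BLetter.th] : Fin 3 → BLetter)
        ≠ ![BLetter.et, BLetter.xi, BLetter.th] := fun h => by simpa using congrFun h 0
    have d2 : (![BLetter.xiL, BLetter.et, BLetter.th] : Fin 3 → BLetter)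
        ≠ ![BLetter.et, BLetter.th, BLetter.xiL] := fun h => by simpa using congrFun h 0
    have d3 : (![BLetter.et, BLetter.xi, BLetter.th] : Fin 3 → BLetter)
        ≠ ![BLetter.et, BLetter.th, BLetter.xiL] := fun h => by simpa using congrFun h 1
    have dC : (![BLetter.et, BLetter.th, BLetter.xiL] : Fin 3 → BLetter)
        ≠ ![BLetter.et, BLetter.xi, BLetter.th] := fun h => by simpa using congrFun h 1
    simp only [Finset.sum_range_succ, Finset.sum_range_zero, ma, mb, mc, adm, true_and,
      Option.some.injEq, genEtaXiTheta] at hb1 hb2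
    simp [d1, d2, d3, dC] at hb1 hb2
    rw [hb1] at hb2
    exact one_ne_zero hb2
  · funext v
    have he : etteChain k = (fun w =>
        if w = ![BLetter.et, BLetter.th, BLetter.et, BLetter.th] then (1:k) else 0) := rfl
    rw [he, barD_indicator3]
    have ma : mergeWord ![BLetter.et, BLetter.th, BLetter.et, BLetter.th] 0 (by omega)
        = some ![BLetter.xiL, BLetter.et, BLetter.th] := by
      unfold mergeWord; simp [mulLetter]; funext j; fin_cases j <;> rfl
    have mb : mergeWord ![BLetter.et, BLetter.th, BLetter.et, BLetter.th] 1 (by omega)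
        = some ![BLetter.et, BLetter.xi, BLetter.th] := by
      unfold mergeWord; simp [mulLetter]; funext j; fin_cases j <;> rfl
    have mc : mergeWord ![BLetter.et, BLetter.th, BLetter.et, BLetter.th] 2 (by omega)
        = some ![BLetter.et, BLetter.th, BLetter.xiL] := by
      unfold mergeWord; simp [mulLetter]; funext j; fin_cases j <;> rfl
    have adm : wordAdm (3+1) ![BLetter.et, BLetter.th, BLetter.et, BLetter.th] := by decide
    have d1 : (![BLetter.xiL, BLetter.et, BLetter.th] : Fin 3 → BLetter)
        ≠ ![BLetter.et, BLetter.xi, BLetter.th] := fun h => by simpa using congrFun h 0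
    have d2 : (![BLetter.xiL, BLetter.et, BLetter.th] : Fin 3 → BLetter)
        ≠ ![BLetter.et, BLetter.th, BLetter.xiL] := fun h => by simpa using congrFun h 0
    have d3 : (![BLetter.et, BLetter.xi, BLetter.th] : Fin 3 → BLetter)
        ≠ ![BLetter.et, BLetter.th, BLetter.xiL] := fun h => by simpa using congrFun h 1
    simp only [ma, mb, mc, adm, true_and, Option.some.injEq, Pi.sub_apply,
      genEtaXiTheta, sigmaChain]
    by_cases h1 : v = ![BLetter.et, BLetter.xi, BLetter.th] <;>
    by_cases h2 : v = ![BLetter.et, BLetter.th, BLetter.xiL] <;>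
    by_cases h3 : v = ![BLetter.xiL, BLetter.et, BLetter.th] <;>
      simp only [h1, h2, h3, if_pos, if_neg, eq_comm] <;>
      simp_all [d1, d2, d3, d1.symm, d2.symm, d3.symm, Ne.symm]
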